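/- For |t| < 1/16, sum_{n=0}^∞ binom(2n,n)² t^n = (2/π) K(16t), where K(z) = ∫₀¹ dx / sqrt((1-x²)(1-z x²)) is the complete elliptic integral of the first kind (Mathematica convention in the parameter z). -/

import Mathlib

open Real MeasureTheory Filter Set intervalIntegral Finset Topology

namespace CBGF

noncomputable def c (n : ℕ) : ℝ := (Nat.centralBinom n : ℝ)

lemma c_pos (n : ℕ) : 0 < c n := by
  have := Nat.centralBinom_pos n
  unfold c; exact_mod_cast this

lemma c_zero : c 0 = 1 := by simp [c]

lemma c_one : c 1 = 2 := by
  have : Nat.centralBinom 1 = 2 := rfl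
  simp [c, this]

lemma c_succ (n : ℕ) : ((n : ℝ) + 1) * c (n + 1) = 2 * (2 * n + 1) * c n := by
  have h := Nat.succ_mul_centralBinom_succ n
  have h2 : ((n + 1) * Nat.centralBinom (n + 1) : ℕ) = ((2 * (2 * n + 1) * Nat.centralBinom n : ℕ)) := h
  have := congrArg (fun m : ℕ => (m : ℝ)) h2
  push_cast at this
  simpa [c] using this

lemma c_le (n : ℕ) : c n ≤ 4 ^ n := by
  have h1 : (2 * n).choose n ≤ ∑ m ∈ range (2 * n + 1), (2 * n).choose m :=
    Finset.single_le_sum (f := fun m => (2 * n).choose m) (fun i _ => Nat.zero_le _)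
      (Finset.mem_range.mpr (by omega))

  have h2 : (2 * n).choose n ≤ 4 ^ n := by
    rw [Nat.sum_range_choose] at h1
    calc (2 * n).choose n ≤ 2 ^ (2 * n) := h1
    _ = 4 ^ n := by rw [pow_mul]; norm_num
  calc c n ≤ ((4 ^ n : ℕ) : ℝ) := by unfold c; rw [show Nat.centralBinom n = (2 * n).choose n from rfl]; exact_mod_cast h2
  _ = 4 ^ n := by push_cast; ring

lemma two_mul_weighted (m : ℕ) :
    2 * ∑ k ∈ range (m + 1), (k : ℝ) * (c k * c (m - k)) =
      (m : ℝ) * ∑ k ∈ range (m + 1), c k * c (m - k) := by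
  have hrefl := Finset.sum_range_reflect (fun k => (k : ℝ) * (c k * c (m - k))) (m + 1)
  rw [two_mul]
  nth_rewrite 1 [← hrefl]
  rw [← Finset.sum_add_distrib, Finset.mul_sum]
  apply Finset.sum_congr rfl
  intro k hk
  have hk' : k ≤ m := by simpa [Nat.lt_succ_iff] using hk
  have h1 : m + 1 - 1 - k = m - k := by omega
  have h2 : m - (m - k) = k := by omega
  rw [h1, h2]
  have hcast : ((m - k : ℕ) : ℝ) = (m : ℝ) - k := by
    rw [Nat.cast_sub hk']
  rw [hcast]
  ring

lemma conv_c (n : ℕ) : ∑ k ∈ range (n + 1), c k * c (n - k) = 4 ^ n := by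
  induction n with
  | zero => simp [c_zero]
  | succ n ih =>
    have hU2 : 2 * ∑ k ∈ range (n + 1), (k : ℝ) * (c k * c (n - k))
        = (n : ℝ) * ∑ k ∈ range (n + 1), c k * c (n - k) := two_mul_weighted n
    have hA : 2 * ∑ k ∈ range (n + 2), (k : ℝ) * (c k * c (n + 1 - k))
        = ((n : ℝ) + 1) * ∑ k ∈ range (n + 2), c k * c (n + 1 - k) := by
      have := two_mul_weighted (n + 1)
      push_cast at this
      convert this using 2
    have hB : ∑ k ∈ range (n + 2), (k : ℝ) * (c k * c (n + 1 - k))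
        = 4 * (∑ k ∈ range (n + 1), (k : ℝ) * (c k * c (n - k)))
          + 2 * ∑ k ∈ range (n + 1), c k * c (n - k) := by
      rw [Finset.sum_range_succ']
      simp only [Nat.cast_zero, zero_mul, add_zero]
      rw [Finset.mul_sum, Finset.mul_sum, ← Finset.sum_add_distrib]
      apply Finset.sum_congr rfl
      intro j _
      have h1 : n + 1 - (j + 1) = n - j := by omega
      rw [h1]
      have hc := c_succ j
      push_cast
      linear_combination c (n - j) * hc
    have hkey : ((n : ℝ) + 1) * ∑ k ∈ range (n + 2), c k * c (n + 1 - k)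
        = ((n : ℝ) + 1) * (4 * ∑ k ∈ range (n + 1), c k * c (n - k)) := by
      rw [← hA, hB]
      linarith [hU2]
    have hn : ((n : ℝ) + 1) ≠ 0 := by positivity
    have := mul_left_cancel₀ hn hkey
    rw [this, ih]
    ring
noncomputable def a (n : ℕ) : ℝ := c n / 4 ^ n

lemma a_pos (n : ℕ) : 0 < a n := div_pos (c_pos n) (by positivity)

lemma a_zero : a 0 = 1 := by simp [a, c_zero]

lemma a_one : a 1 = 1 / 2 := by simp [a, c_one]; norm_num

lemma a_le_one (n : ℕ) : a n ≤ 1 := (div_le_one (by positivity)).2 (c_le n)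

lemma a_succ (n : ℕ) : a (n + 1) = a n * ((2 * n + 1) / (2 * n + 2)) := by
  have hc := c_succ n
  have hn : ((n : ℝ) + 1) ≠ 0 := by positivity
  have h4 : ((4 : ℝ) ^ n) ≠ 0 := by positivity
  unfold a
  rw [pow_succ]
  field_simp
  linear_combination (2 : ℝ) * hc

lemma a_anti (n : ℕ) : a (n + 1) ≤ a n := by
  rw [a_succ]
  have h1 : (2 * (n : ℝ) + 1) / (2 * n + 2) ≤ 1 := by
    rw [div_le_one (by positivity)]; linarith
  nlinarith [a_pos n]

lemma norm_a_mul_pow_le {u : ℝ} (n : ℕ) : ‖a n * u ^ n‖ ≤ |u| ^ n := by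
  rw [Real.norm_eq_abs, abs_mul, abs_of_nonneg (a_pos n).le, abs_pow]
  calc a n * |u| ^ n ≤ 1 * |u| ^ n := by
        have := a_le_one n
        have : (0:ℝ) ≤ |u| ^ n := by positivity
        nlinarith [a_le_one n]
  _ = |u| ^ n := one_mul _

lemma summable_norm_a {u : ℝ} (hu : |u| < 1) : Summable fun n => ‖a n * u ^ n‖ :=
  Summable.of_nonneg_of_le (fun n => norm_nonneg _) (fun n => norm_a_mul_pow_le n)
    (summable_geometric_of_lt_one (abs_nonneg u) hu)

lemma summable_a {u : ℝ} (hu : |u| < 1) : Summable fun n => a n * u ^ n :=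
  (summable_norm_a hu).of_norm

lemma tsum_a_sq {u : ℝ} (hu : |u| < 1) :
    (∑' n, a n * u ^ n) * (∑' n, a n * u ^ n) = (1 - u)⁻¹ := by
  rw [tsum_mul_tsum_eq_tsum_sum_range_of_summable_norm (summable_norm_a hu) (summable_norm_a hu)]
  have h1 : ∀ n : ℕ, ∑ k ∈ range (n + 1), (a k * u ^ k) * (a (n - k) * u ^ (n - k)) = u ^ n := by
    intro n
    have hterm : ∀ k ∈ range (n + 1),
        (a k * u ^ k) * (a (n - k) * u ^ (n - k)) = c k * c (n - k) * (u ^ n / 4 ^ n) := by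
      intro k hk
      have hk' : k ≤ n := by simpa [Nat.lt_succ_iff] using hk
      have h4 : (4 : ℝ) ^ k * 4 ^ (n - k) = 4 ^ n := by rw [← pow_add]; congr 1; omega
      have hu' : u ^ k * u ^ (n - k) = u ^ n := by rw [← pow_add]; congr 1; omega
      have e : (a k * u ^ k) * (a (n - k) * u ^ (n - k))
          = c k * c (n - k) * ((u ^ k * u ^ (n - k)) / (4 ^ k * 4 ^ (n - k))) := by
        unfold a; ring
      rw [e, h4, hu']
    rw [Finset.sum_congr rfl hterm, ← Finset.sum_mul, conv_c]
    have h4 : ((4 : ℝ) ^ n) ≠ 0 := by positivity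
    field_simp
  rw [tsum_congr h1, tsum_geometric_of_norm_lt_one (by rwa [Real.norm_eq_abs])]

set_option maxHeartbeats 800000 in
lemma tsum_a_pos {u : ℝ} (hu : |u| < 1) : 0 < ∑' n, a n * u ^ n := by
  have hsum := summable_a hu
  have he : Summable fun k => a (2 * k) * u ^ (2 * k) := by
    have := Summable.comp_injective (f := fun n => a n * u ^ n) (i := fun k : ℕ => 2 * k)
      hsum (fun m n h => by simp only [] at h; omega)
    exact this
  have ho : Summable fun k => a (2 * k + 1) * u ^ (2 * k + 1) := by
    have := Summable.comp_injective (f := fun n => a n * u ^ n) (i := fun k : ℕ => 2 * k + 1)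
      hsum (fun m n h => by simp only [] at h; omega)
    exact this
  have hsplit : (∑' k, a (2*k) * u^(2*k)) + (∑' k, a (2*k+1) * u^(2*k+1)) = ∑' n, a n * u^n :=
    tsum_even_add_odd (f := fun n => a n * u ^ n) he ho
  rw [← hsplit, ← Summable.tsum_add he ho]
  have hg : ∀ k, 0 ≤ a (2 * k) * u ^ (2 * k) + a (2 * k + 1) * u ^ (2 * k + 1) := by
    intro k
    have heven : u ^ (2 * k) = |u| ^ (2 * k) := by
      rw [← abs_pow, abs_of_nonneg ((even_two_mul k).pow_nonneg u)]
    have habs : |a (2 * k + 1) * u ^ (2 * k + 1)| ≤ a (2 * k) * u ^ (2 * k) := by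
      rw [abs_mul, abs_of_nonneg (a_pos _).le, abs_pow, heven]
      have e1 : |u| ^ (2 * k + 1) ≤ |u| ^ (2 * k) :=
        pow_le_pow_of_le_one (abs_nonneg u) hu.le (by omega)
      have e2 : a (2 * k + 1) ≤ a (2 * k) := a_anti (2 * k)
      exact mul_le_mul e2 e1 (by positivity) (a_pos _).le
    linarith [neg_abs_le (a (2 * k + 1) * u ^ (2 * k + 1))]
  have h0 : 0 < a (2 * 0) * u ^ (2 * 0) + a (2 * 0 + 1) * u ^ (2 * 0 + 1) := by
    norm_num [a_zero, a_one]
    have := abs_lt.mp hu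
    linarith [this.1]
  exact Summable.tsum_pos (he.add ho) hg 0 h0

lemma hasSum_inv_sqrt {u : ℝ} (hu : |u| < 1) :
    HasSum (fun n => a n * u ^ n) (1 / Real.sqrt (1 - u)) := by
  have hsum := summable_a hu
  have hpos := tsum_a_pos hu
  have heq : (∑' n, a n * u ^ n) = 1 / Real.sqrt (1 - u) := by
    conv_lhs => rw [← Real.sqrt_mul_self hpos.le]
    rw [tsum_a_sq hu, Real.sqrt_inv, one_div]
  exact heq ▸ hsum.hasSum
lemma wallis (n : ℕ) :
    ∫ θ in (0:ℝ)..(π / 2), Real.sin θ ^ (2 * n) = π / 2 * a n := by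
  induction n with
  | zero => simp [a_zero]
  | succ n ih =>
    have h := integral_sin_pow (a := 0) (b := π / 2) (2 * n)
    have e : 2 * (n + 1) = 2 * n + 2 := by ring
    rw [e, h, Real.sin_zero, Real.cos_pi_div_two, ih, a_succ]
    have h0 : (0:ℝ) ^ (2 * n + 1) = 0 := by
      exact zero_pow (by omega)
    rw [h0]
    push_cast
    ring

lemma int_inv_sqrt :
    IntervalIntegrable (fun x : ℝ => 1 / Real.sqrt (1 - x ^ 2)) volume 0 1 := by
  apply intervalIntegrable_deriv_of_nonneg (g := Real.arcsin)
  · exact Real.continuous_arcsin.continuousOn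
  · intro x hx
    rw [min_eq_left (zero_le_one' ℝ), max_eq_right (zero_le_one' ℝ)] at hx
    exact Real.hasDerivAt_arcsin (by linarith [hx.1]) (ne_of_lt hx.2)
  · intro x _
    positivity

lemma f_meas (n : ℕ) : Measurable fun x : ℝ => x ^ (2 * n) / Real.sqrt (1 - x ^ 2) := by
  fun_prop

lemma f_intIntegrable (n : ℕ) :
    IntervalIntegrable (fun x : ℝ => x ^ (2 * n) / Real.sqrt (1 - x ^ 2)) volume 0 1 := by
  have hg := int_inv_sqrt
  rw [intervalIntegrable_iff_integrableOn_Ioc_of_le (zero_le_one' ℝ)] at hg ⊢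
  apply hg.mono' ((f_meas n).aestronglyMeasurable)
  filter_upwards [ae_restrict_mem measurableSet_Ioc] with x hx
  have h0 : 0 ≤ x := hx.1.le
  have h1 : x ≤ 1 := hx.2
  rw [Real.norm_eq_abs, abs_of_nonneg (by positivity)]
  rcases eq_or_lt_of_le h1 with h | h
  · subst h
    simp
  · have hd : 0 < Real.sqrt (1 - x ^ 2) := Real.sqrt_pos.mpr (by nlinarith)
    gcongr
    exact pow_le_one₀ h0 h1
  
lemma moment (n : ℕ) :
    ∫ x in (0:ℝ)..1, x ^ (2 * n) / Real.sqrt (1 - x ^ 2) = π / 2 * a n := by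
  set f : ℝ → ℝ := fun x => x ^ (2 * n) / Real.sqrt (1 - x ^ 2) with hf
  set Φ : ℝ → ℝ := fun y => ∫ x in (0:ℝ)..y, f x with hΦ
  set Ψ : ℝ → ℝ := fun b => ∫ θ in (0:ℝ)..b, Real.sin θ ^ (2 * n) with hΨ
  have key : ∀ b ∈ Ioo (0:ℝ) (π / 2), Φ (Real.sin b) = Ψ b := by
    intro b hb
    have hb0 : (0:ℝ) ≤ b := hb.1.le
    have hbπ : b < π / 2 := hb.2
    have himg : Real.sin '' (uIcc (0:ℝ) b) ⊆ Ioo (-1 : ℝ) 1 := by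
      rintro y ⟨x, hx, rfl⟩
      rw [uIcc_of_le hb0] at hx
      have hxI : x ∈ Icc (-(π/2)) (π/2) := ⟨by linarith [hx.1, Real.pi_pos], by linarith [hx.2]⟩
      constructor
      · have : 0 ≤ Real.sin x :=
          Real.sin_nonneg_of_nonneg_of_le_pi hx.1 (by linarith [hx.2, Real.pi_pos])
        linarith
      · have hπI : (π/2) ∈ Icc (-(π/2)) (π/2) := ⟨by linarith [Real.pi_pos], le_refl _⟩
        have h1 : Real.sin x < Real.sin (π/2) :=
          Real.strictMonoOn_sin hxI hπI (lt_of_le_of_lt hx.2 hbπ)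
        rwa [Real.sin_pi_div_two] at h1
    have hcont_f : ContinuousOn f (Real.sin '' (uIcc (0:ℝ) b)) := by
      apply ContinuousOn.mono ?_ himg
      apply ContinuousOn.div (by fun_prop) (by fun_prop)
      intro y hy
      have hy2 : 0 < 1 - y ^ 2 := by nlinarith [hy.1, hy.2]
      exact (Real.sqrt_pos.mpr hy2).ne'
    have hsub := intervalIntegral.integral_comp_smul_deriv' (a := 0) (b := b)
      (f := Real.sin) (f' := Real.cos) (g := f)
      (fun x _ => Real.hasDerivAt_sin x) Real.continuous_cos.continuousOn hcont_f
    rw [Real.sin_zero] at hsub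
    have hΦval : Φ (Real.sin b) = ∫ x in (0:ℝ)..Real.sin b, f x := rfl
    rw [hΦval, ← hsub]
    apply intervalIntegral.integral_congr
    intro θ hθ
    rw [uIcc_of_le hb0] at hθ
    have hcos : 0 < Real.cos θ :=
      Real.cos_pos_of_mem_Ioo ⟨by linarith [hθ.1, Real.pi_pos], lt_of_le_of_lt hθ.2 hbπ⟩
    have h1 : Real.sqrt (1 - Real.sin θ ^ 2) = Real.cos θ := by
      rw [← Real.cos_sq']
      exact Real.sqrt_sq hcos.le
    simp only [Function.comp, smul_eq_mul, hf]
    rw [h1]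
    field_simp
  have hint : IntegrableOn f (uIcc (0:ℝ) 1) volume := by
    rw [uIcc_of_le (zero_le_one' ℝ), integrableOn_Icc_iff_integrableOn_Ioc]
    exact (intervalIntegrable_iff_integrableOn_Ioc_of_le (zero_le_one' ℝ)).mp (f_intIntegrable n)
  have hΦcont : ContinuousOn Φ (uIcc (0:ℝ) 1) :=
    intervalIntegral.continuousOn_primitive_interval hint
  have hΦ1 : Tendsto Φ (𝓝[uIcc (0:ℝ) 1] 1) (𝓝 (Φ 1)) := hΦcont 1 right_mem_uIcc
  have hsin_t : Tendsto Real.sin (𝓝[<] (π / 2)) (𝓝[uIcc (0:ℝ) 1] 1) := by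
    apply tendsto_nhdsWithin_of_tendsto_nhds_of_eventually_within
    · have h1 : Tendsto Real.sin (𝓝 (π / 2)) (𝓝 (Real.sin (π / 2))) :=
        Real.continuous_sin.continuousAt
      rw [Real.sin_pi_div_two] at h1
      exact h1.mono_left nhdsWithin_le_nhds
    · filter_upwards [Ioo_mem_nhdsLT_of_mem
        (⟨Real.pi_div_two_pos, le_refl _⟩ : (π/2) ∈ Ioc (0:ℝ) (π/2))] with b hb
      rw [uIcc_of_le (zero_le_one' ℝ)]
      exact ⟨Real.sin_nonneg_of_nonneg_of_le_pi hb.1.le (by linarith [hb.2, Real.pi_pos]),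
        Real.sin_le_one b⟩
  have hcomp : Tendsto (fun b => Φ (Real.sin b)) (𝓝[<] (π / 2)) (𝓝 (Φ 1)) := hΦ1.comp hsin_t
  have hΨcont : Tendsto Ψ (𝓝[<] (π / 2)) (𝓝 (Ψ (π / 2))) := by
    have hc : Continuous Ψ :=
      intervalIntegral.continuous_primitive
        (fun a b => Continuous.intervalIntegrable (by fun_prop) a b) 0
    exact (hc.tendsto _).mono_left nhdsWithin_le_nhds
  have heq : (fun b => Φ (Real.sin b)) =ᶠ[𝓝[<] (π / 2)] Ψ := by
    filter_upwards [Ioo_mem_nhdsLT_of_mem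
      (⟨Real.pi_div_two_pos, le_refl _⟩ : (π/2) ∈ Ioc (0:ℝ) (π/2))] with b hb
    exact key b hb
  have hlim : Φ 1 = Ψ (π / 2) := tendsto_nhds_unique (hcomp.congr' heq) hΨcont
  calc ∫ x in (0:ℝ)..1, f x = Φ 1 := rfl
  _ = Ψ (π / 2) := hlim
  _ = π / 2 * a n := wallis n
end CBGF

open CBGF in
/-- For `|t| < 1/16`, `∑ binom(2n,n)² tⁿ = (2/π)·K(16t)` with
`K(z) = ∫₀¹ dx/√((1-x²)(1-zx²))`. -/
theorem centralBinom_sq_generating_function (t : ℝ) (ht : |t| < 1 / 16) :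
    ∑' n : ℕ, ((2 * n).choose n : ℝ) ^ 2 * t ^ n
      = (2 / Real.pi) * ∫ x in (0 : ℝ)..1, 1 / Real.sqrt ((1 - x ^ 2) * (1 - 16 * t * x ^ 2)) := by
  have hu : |16 * t| < 1 := by
    rw [abs_mul, abs_of_nonneg (by norm_num : (0:ℝ) ≤ 16)]
    linarith
  set F : ℕ → ℝ → ℝ :=
    fun n x => (a n * (16 * t) ^ n) * (x ^ (2 * n) / Real.sqrt (1 - x ^ 2)) with hF
  -- pointwise series identity on (0,1)
  have hpt : ∀ x ∈ Set.Ioo (0:ℝ) 1,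
      (∑' n, F n x) = 1 / Real.sqrt ((1 - x ^ 2) * (1 - 16 * t * x ^ 2)) := by
    intro x hx
    have hx0 : 0 < x := hx.1
    have hx1 : x < 1 := hx.2
    have hxx : |16 * t * x ^ 2| < 1 := by
      rw [abs_mul]
      have hx2 : |x ^ 2| ≤ 1 := by rw [abs_of_nonneg (sq_nonneg x)]; nlinarith
      calc |16 * t| * |x ^ 2| ≤ |16 * t| * 1 := by
            apply mul_le_mul_of_nonneg_left hx2 (abs_nonneg _)
      _ < 1 := by rw [mul_one]; exact hu
    have hs := hasSum_inv_sqrt hxx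
    have hs2 := hs.mul_left (1 / Real.sqrt (1 - x ^ 2))
    have hterm : ∀ n : ℕ,
        (1 / Real.sqrt (1 - x ^ 2)) * (a n * (16 * t * x ^ 2) ^ n) = F n x := by
      intro n
      have e1 : (16 * t * x ^ 2) ^ n = (16 * t) ^ n * x ^ (2 * n) := by
        rw [mul_pow, ← pow_mul]
      rw [e1, hF]
      ring
    have htsum : (∑' n, F n x)
        = (1 / Real.sqrt (1 - x ^ 2)) * (1 / Real.sqrt (1 - 16 * t * x ^ 2)) := by
      rw [← hs2.tsum_eq]
      exact tsum_congr fun n => (hterm n).symm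
    rw [htsum, Real.sqrt_mul (by nlinarith : (0:ℝ) ≤ 1 - x ^ 2)]
    rw [one_div, one_div, one_div, mul_inv]
  -- integrability of each term on Ioo 0 1
  have hIoo : ∀ n : ℕ, IntegrableOn (F n) (Set.Ioo (0:ℝ) 1) volume := by
    intro n
    have h1 := (intervalIntegrable_iff_integrableOn_Ioo_of_le (zero_le_one' ℝ)).mp
      (f_intIntegrable n)
    exact (h1.const_mul (a n * (16 * t) ^ n))
  -- value of the moment integral over Ioo
  have hmoment_Ioo : ∀ n : ℕ,
      ∫ x in Set.Ioo (0:ℝ) 1, x ^ (2 * n) / Real.sqrt (1 - x ^ 2) = π / 2 * a n := by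
    intro n
    rw [← MeasureTheory.integral_Ioc_eq_integral_Ioo,
      ← intervalIntegral.integral_of_le (zero_le_one' ℝ)]
    exact moment n
  have hFval : ∀ n : ℕ,
      ∫ x in Set.Ioo (0:ℝ) 1, F n x = (a n * (16 * t) ^ n) * (π / 2 * a n) := by
    intro n
    rw [← hmoment_Ioo n, ← MeasureTheory.integral_const_mul]
  have hnorm_int : ∀ n : ℕ,
      ∫ x in Set.Ioo (0:ℝ) 1, ‖F n x‖ = |a n * (16 * t) ^ n| * (π / 2 * a n) := by
    intro n
    rw [← hmoment_Ioo n, ← MeasureTheory.integral_const_mul]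
    apply MeasureTheory.setIntegral_congr_fun measurableSet_Ioo
    intro x hx
    have hnn : 0 ≤ x ^ (2 * n) / Real.sqrt (1 - x ^ 2) :=
      div_nonneg (pow_nonneg hx.1.le _) (Real.sqrt_nonneg _)
    rw [hF]
    simp only [norm_mul, Real.norm_eq_abs, abs_of_nonneg hnn]
    rw [abs_mul]
  -- summability of the integrals of norms
  have hsummable : Summable fun n => ∫ x in Set.Ioo (0:ℝ) 1, ‖F n x‖ := by
    apply Summable.of_nonneg_of_le
      (fun n => MeasureTheory.integral_nonneg fun x => norm_nonneg _)
      (fun n => ?_)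
      (((summable_geometric_of_lt_one (by positivity) hu).mul_left (π / 2)))
    rw [hnorm_int n]
    have h1 : |a n * (16 * t) ^ n| ≤ |16 * t| ^ n := by
      rw [abs_mul, abs_of_nonneg (a_pos n).le, abs_pow]
      calc a n * |16 * t| ^ n ≤ 1 * |16 * t| ^ n :=
            mul_le_mul_of_nonneg_right (a_le_one n) (by positivity)
      _ = |16 * t| ^ n := one_mul _
    have h2 : π / 2 * a n ≤ π / 2 :=
      (mul_le_iff_le_one_right (by linarith [Real.pi_pos])).mpr (a_le_one n)
    calc |a n * (16 * t) ^ n| * (π / 2 * a n) ≤ |16 * t| ^ n * (π / 2) := by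
          apply mul_le_mul h1 h2 (mul_nonneg (by linarith [Real.pi_pos]) (a_pos n).le)
            (by positivity)
    _ = π / 2 * |16 * t| ^ n := by ring
  -- interchange
  have hmeas : ∀ n : ℕ, MeasureTheory.AEStronglyMeasurable (F n)
      (volume.restrict (Set.Ioo (0:ℝ) 1)) := fun n => (hIoo n).1
  have hinter := MeasureTheory.integral_tsum_of_summable_integral_norm
    (μ := volume.restrict (Set.Ioo (0:ℝ) 1)) (F := F) hIoo hsummable
  -- rewrite the target integral
  have hR : (∫ x in (0:ℝ)..1, 1 / Real.sqrt ((1 - x ^ 2) * (1 - 16 * t * x ^ 2)))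
      = ∑' n, ∫ x in Set.Ioo (0:ℝ) 1, F n x := by
    rw [intervalIntegral.integral_of_le (zero_le_one' ℝ),
      MeasureTheory.integral_Ioc_eq_integral_Ioo]
    rw [hinter]
    apply MeasureTheory.setIntegral_congr_fun measurableSet_Ioo
    intro x hx
    exact (hpt x hx).symm
  rw [hR]
  have hπ : (π : ℝ) ≠ 0 := Real.pi_ne_zero
  have hsum_eq : ∀ n : ℕ, ∫ x in Set.Ioo (0:ℝ) 1, F n x
      = π / 2 * (((2 * n).choose n : ℝ) ^ 2 * t ^ n) := by
    intro n
    rw [hFval n]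
    have hc : c n = ((2 * n).choose n : ℝ) := by
      rw [c]; norm_cast
    have h4 : ((4:ℝ) ^ n) ≠ 0 := by positivity
    have h16 : (16:ℝ) ^ n = 4 ^ n * 4 ^ n := by rw [← mul_pow]; norm_num
    rw [a, hc, mul_pow, h16]
    field_simp
  rw [tsum_congr hsum_eq, tsum_mul_left]
  rw [← mul_assoc]
  rw [show (2 / π) * (π / 2) = 1 by field_simp]
  rw [one_mul]
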